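/- For each 0 ≤ k ≤ n, every n-dimensional holomorphic inner product space (V,g) contains a generic totally real real slice W of signature (k, n−k), and any two real slices of V of the same signature are mapped to each other by a g-orthogonal complex-linear transformation of V. -/

import Mathlib

open Module

-- ℂ-linear independence from a diagonal nonzero Gram matrix
private lemma gram_li {V : Type*} [AddCommGroup V] [Module ℂ V]
    (g : LinearMap.BilinForm ℂ V) {m : ℕ} (w : Fin m → V) (d : Fin m → ℂ)
    (hd : ∀ i, d i ≠ 0)
    (hw : ∀ i j, g (w i) (w j) = if i = j then d i else 0) :
    LinearIndependent ℂ w := by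
  rw [Fintype.linearIndependent_iff]
  intro z hz j
  have h0 : g (∑ i, z i • w i) (w j) = 0 := by rw [hz]; simp
  have h1 : (∑ i, z i * (if i = j then d i else 0)) = 0 := by
    simpa [map_sum, LinearMap.sum_apply, smul_eq_mul, hw] using h0
  have h2 : z j * d j = 0 := by simpa using h1
  exact (mul_eq_zero.1 h2).resolve_right (hd j)

private lemma exists_gram {V : Type*} [AddCommGroup V] [Module ℂ V]
    [FiniteDimensional ℂ V]
    (g : LinearMap.BilinForm ℂ V)
    (hsymm : ∀ x y : V, g x y = g y x)
    (hnd : ∀ x : V, (∀ y : V, g x y = 0) → x = 0) (k : ℕ) :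
    ∃ w : Basis (Fin (finrank ℂ V)) ℂ V,
      ∀ i j, g (w i) (w j) =
        if i = j then (if (i : ℕ) < k then (-1 : ℂ) else 1) else 0 := by
  letI : Invertible (2 : ℂ) := invertibleOfNonzero two_ne_zero
  have hs : LinearMap.IsSymm g := LinearMap.isSymm_def.mpr fun x y => hsymm x y
  obtain ⟨v, hv⟩ := LinearMap.BilinForm.exists_orthogonal_basis hs
  have hvd : ∀ i, g (v i) (v i) ≠ 0 := by
    intro i hzero
    have hvi : v i = 0 := by
      apply hnd
      intro y
      have hy := Basis.sum_repr v y
      rw [← hy, map_sum]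
      refine Finset.sum_eq_zero fun j _ => ?_
      rw [map_smul, smul_eq_mul]
      rcases eq_or_ne i j with rfl | hij
      · rw [hzero, mul_zero]
      · rw [hv hij, mul_zero]
    exact v.ne_zero i hvi
  choose s hs2 using fun i => IsAlgClosed.exists_pow_nat_eq (g (v i) (v i)) (n := 2) two_pos
  have hsne : ∀ i, s i ≠ 0 := by
    intro i h; apply hvd i; rw [← hs2, h]; ring
  set c : Fin (finrank ℂ V) → ℂ :=
    fun i => (if (i : ℕ) < k then Complex.I else 1) * (s i)⁻¹ with hc
  have hcne : ∀ i, c i ≠ 0 := by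
    intro i
    rw [hc]
    dsimp only
    split
    · exact mul_ne_zero Complex.I_ne_zero (inv_ne_zero (hsne i))
    · exact mul_ne_zero one_ne_zero (inv_ne_zero (hsne i))
  refine ⟨v.unitsSMul (fun i => Units.mk0 (c i) (hcne i)), ?_⟩
  intro i j
  simp only [Basis.unitsSMul_apply, Units.smul_def, Units.val_mk0, map_smul,
    LinearMap.smul_apply, smul_eq_mul]
  rcases eq_or_ne i j with rfl | hij
  · rw [if_pos rfl, ← hs2 i, hc]
    dsimp only
    have h0 := hsne i
    have hinv : (s i)⁻¹ * (s i)⁻¹ * s i ^ 2 = 1 := by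
      field_simp
    rcases lt_or_ge (i : ℕ) k with h | h
    · rw [if_pos h, if_pos h]
      have he : Complex.I * (s i)⁻¹ * (Complex.I * (s i)⁻¹ * s i ^ 2)
          = Complex.I * Complex.I * ((s i)⁻¹ * (s i)⁻¹ * s i ^ 2) := by ring
      rw [he, hinv, mul_one, Complex.I_mul_I]
    · rw [if_neg (not_lt.2 h), if_neg (not_lt.2 h)]
      have he : (1 : ℂ) * (s i)⁻¹ * (1 * (s i)⁻¹ * s i ^ 2)
          = (s i)⁻¹ * (s i)⁻¹ * s i ^ 2 := by ring
      rw [he, hinv]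
  · rw [hv hij, if_neg hij, mul_zero, mul_zero]



/-- Every `n`-dimensional holomorphic inner product space contains, for each
`0 ≤ k ≤ n`, a generic totally real real slice of signature `(k, n-k)` (given by
the real span of a g-orthogonal basis `w` with `g(wᵢ,wᵢ) = -1` for `i < k` and
`1` otherwise), and any two such real slices of the same signature are related
by a complex orthogonal transformation of `V`. -/
theorem stmt_15 {V : Type*} [AddCommGroup V] [Module ℂ V] [Module ℝ V]
    [IsScalarTower ℝ ℂ V] [FiniteDimensional ℂ V]
    (g : LinearMap.BilinForm ℂ V)
    (hsymm : ∀ x y : V, g x y = g y x)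
    (hnd : ∀ x : V, (∀ y : V, g x y = 0) → x = 0)
    (k : ℕ) (hk : k ≤ Module.finrank ℂ V) :
    -- existence of a generic totally real real slice of signature (k, n-k)
    (∃ w : Fin (Module.finrank ℂ V) → V,
      (∀ i j, g (w i) (w j) =
        if i = j then (if (i : ℕ) < k then (-1 : ℂ) else 1) else 0) ∧
      LinearIndependent ℝ w ∧
      -- genericity : W + iW = V
      (∀ v : V, ∃ c d : Fin (Module.finrank ℂ V) → ℝ,
        v = (∑ i, (c i : ℂ) • w i) + Complex.I • ∑ i, (d i : ℂ) • w i) ∧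
      -- total reality : W ∩ iW = {0}
      (∀ x ∈ Submodule.span ℝ (Set.range w),
        (∃ y ∈ Submodule.span ℝ (Set.range w), x = Complex.I • y) → x = 0)) ∧
    -- any two real slices of the same signature are related by an element of O(n, ℂ)
    (∀ w₁ w₂ : Fin (Module.finrank ℂ V) → V,
      (∀ i j, g (w₁ i) (w₁ j) =
        if i = j then (if (i : ℕ) < k then (-1 : ℂ) else 1) else 0) →
      (∀ i j, g (w₂ i) (w₂ j) =
        if i = j then (if (i : ℕ) < k then (-1 : ℂ) else 1) else 0) →
      LinearIndependent ℝ w₁ → LinearIndependent ℝ w₂ →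
      ∃ A : V ≃ₗ[ℂ] V, (∀ x y : V, g (A x) (A y) = g x y) ∧
        (fun x => A x) '' ↑(Submodule.span ℝ (Set.range w₁)) =
          ↑(Submodule.span ℝ (Set.range w₂))) := by
    classical
  have hsm : ∀ (r : ℝ) (x : V), (r : ℂ) • x = r • x := by
    intro r x
    rw [← Complex.coe_algebraMap]
    exact algebraMap_smul ℂ r x
  constructor
  · -- existence
    obtain ⟨b, hb⟩ := exists_gram g hsymm hnd k
    have hRinj : Function.Injective fun r : ℝ => r • (1 : ℂ) := by
      intro a b h
      simpa using h
    refine ⟨⇑b, hb, b.linearIndependent.restrict_scalars hRinj, ?_, ?_⟩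
    · intro v
      refine ⟨fun i => (b.repr v i).re, fun i => (b.repr v i).im, ?_⟩
      conv_lhs => rw [← Basis.sum_repr b v]
      rw [Finset.smul_sum, ← Finset.sum_add_distrib]
      refine Finset.sum_congr rfl fun i _ => ?_
      rw [smul_smul, ← add_smul]
      congr 1
      rw [mul_comm]
      exact (Complex.re_add_im _).symm
    · rintro x hx ⟨y, hy, rfl⟩
      rw [Submodule.mem_span_range_iff_exists_fun] at hx hy
      obtain ⟨cx, hcx⟩ := hx
      obtain ⟨cy, hcy⟩ := hy
      have hxe : Complex.I • y = ∑ i, ((cx i : ℂ)) • b i := by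
        rw [← hcx]
        exact Finset.sum_congr rfl fun i _ => (hsm _ _).symm
      have hiy : Complex.I • y = ∑ i, (Complex.I * (cy i : ℂ)) • b i := by
        rw [← hcy, Finset.smul_sum]
        exact Finset.sum_congr rfl fun i _ => by rw [← hsm, smul_smul]
      have hzero : ∑ i, ((cx i : ℂ) - Complex.I * cy i) • b i = 0 := by
        simp only [sub_smul, Finset.sum_sub_distrib, ← hxe, ← hiy, sub_self]
      have hco := Fintype.linearIndependent_iff.mp b.linearIndependent _ hzero
      have hcx0 : ∀ i, cx i = 0 := by
        intro i
        have h := congrArg Complex.re (hco i)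
        simpa using h
      rw [hxe]
      simp [hcx0]
  · intro w₁ w₂ h1 h2 _ _
    have hdne : ∀ i : Fin (Module.finrank ℂ V),
        (if (i : ℕ) < k then (-1 : ℂ) else 1) ≠ 0 := fun i => by split <;> simp
    have li1 : LinearIndependent ℂ w₁ := gram_li g w₁ _ hdne h1
    have li2 : LinearIndependent ℂ w₂ := gram_li g w₂ _ hdne h2
    have hcard : Fintype.card (Fin (Module.finrank ℂ V)) = Module.finrank ℂ V :=
      Fintype.card_fin _
    let b₁ : Basis (Fin (Module.finrank ℂ V)) ℂ V :=
      Basis.mk li1 (li1.span_eq_top_of_card_eq_finrank' hcard).ge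
    let b₂ : Basis (Fin (Module.finrank ℂ V)) ℂ V :=
      Basis.mk li2 (li2.span_eq_top_of_card_eq_finrank' hcard).ge
    have hb₁ : ⇑b₁ = w₁ := Basis.coe_mk _ _
    have hb₂ : ⇑b₂ = w₂ := Basis.coe_mk _ _
    set A := b₁.equiv b₂ (Equiv.refl _) with hAdef
    have hA : ∀ i, A (w₁ i) = w₂ i := by
      intro i
      rw [← hb₁, ← hb₂, hAdef, Basis.equiv_apply, Equiv.refl_apply]
    have hgA : ∀ x y : V, g (A x) (A y) = g x y := by
      have hext : g.compl₁₂ (A : V →ₗ[ℂ] V) (A : V →ₗ[ℂ] V) = g := by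
        apply LinearMap.ext_basis b₁ b₁
        intro i j
        rw [LinearMap.compl₁₂_apply]
        simp only [hb₁, LinearEquiv.coe_coe]
        rw [hA, hA, h1, h2]
      intro x y
      calc g (A x) (A y) = (g.compl₁₂ (A : V →ₗ[ℂ] V) (A : V →ₗ[ℂ] V)) x y := rfl
        _ = g x y := by rw [hext]
    refine ⟨A, hgA, ?_⟩
    have hmap : Submodule.map ((A : V →ₗ[ℂ] V).restrictScalars ℝ)
        (Submodule.span ℝ (Set.range w₁)) = Submodule.span ℝ (Set.range w₂) := by
      rw [Submodule.map_span]
      congr 1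
      rw [← Set.range_comp]
      exact congrArg Set.range (funext fun i => by
        simpa using hA i)
    have := congrArg (fun p : Submodule ℝ V => (p : Set V)) hmap
    simpa [Submodule.map_coe] using this
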